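/- For every n ≥ 1, Σ_{p=0}^{n−1} (1/2 − 1/2^{p+2})² + Σ_{p=0}^∞ (1/2^{p+2} − 1/2^{p+n+2})² = n/4 − 1/3 + 1/(3·2^n). Consequently, (1/n)∫_0^1 (Σ_{k=1}^n f(2^k x))² dx → 1/4 as n → ∞, where f(x) = x − ⌊x⌋ − 1/2. -/

import Mathlib

open MeasureTheory Filter

/-- The first Bernoulli polynomial of the fractional part, `f(x) = x - ⌊x⌋ - 1/2`. -/
noncomputable def bern (x : ℝ) : ℝ := x - ⌊x⌋ - 1 / 2

noncomputable def S (n : ℕ) (x : ℝ) : ℝ := ∑ j ∈ Finset.range n, bern (2 ^ (j + 1) * x)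

lemma bern_eq (x : ℝ) : bern x = Int.fract x - 1 / 2 := by
  simp only [bern, Int.fract]

lemma bern_meas : Measurable bern := by
  have : bern = fun x => Int.fract x - 1 / 2 := funext bern_eq
  rw [this]; exact measurable_fract.sub measurable_const

lemma bern_bd (x : ℝ) : |bern x| ≤ 1 := by
  rw [bern_eq]
  have h1 := Int.fract_nonneg x
  have h2 := Int.fract_lt_one x
  rw [abs_le]; constructor <;> linarith

lemma bern_per : Function.Periodic bern 1 := fun x => by
  rw [bern_eq, bern_eq, Int.fract_add_one]

lemma bern_per_nat (x : ℝ) (m : ℕ) : bern (x + m) = bern x := by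
  rw [bern_eq, bern_eq, Int.fract_add_natCast]

lemma S_per (n : ℕ) : Function.Periodic (S n) 1 := fun x => by
  unfold S
  refine Finset.sum_congr rfl fun j _ => ?_
  have h : (2:ℝ) ^ (j+1) * (x + 1) = 2 ^ (j+1) * x + ((2 ^ (j+1) : ℕ) : ℝ) := by
    push_cast; ring
  rw [h, bern_per_nat]

lemma S_meas (n : ℕ) : Measurable (S n) := by
  unfold S
  exact Finset.measurable_sum _ fun j _ => bern_meas.comp (measurable_id.const_mul _)

lemma S_bd (n : ℕ) (x : ℝ) : |S n x| ≤ n := by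
  unfold S
  calc |∑ j ∈ Finset.range n, bern (2 ^ (j+1) * x)|
      ≤ ∑ j ∈ Finset.range n, |bern (2 ^ (j+1) * x)| := Finset.abs_sum_le_sum_abs _ _
    _ ≤ ∑ _j ∈ Finset.range n, (1:ℝ) := Finset.sum_le_sum fun j _ => bern_bd _
    _ = n := by simp

lemma intInt {h : ℝ → ℝ} (hm : Measurable h) {c : ℝ} (hb : ∀ x, |h x| ≤ c) (a b : ℝ) :
    IntervalIntegrable h volume a b := by
  rw [intervalIntegrable_iff]
  have : IsFiniteMeasure (volume.restrict (Set.uIoc a b)) :=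
    ⟨by rw [Measure.restrict_apply_univ, Set.uIoc]; exact measure_Ioc_lt_top⟩
  exact ⟨hm.aestronglyMeasurable, HasFiniteIntegral.of_bounded (ae_of_all _ hb)⟩

lemma comp_two {g : ℝ → ℝ} (hm : Measurable g) {c : ℝ} (hb : ∀ x, |g x| ≤ c)
    (hp : Function.Periodic g 1) :
    ∫ x in (0:ℝ)..1, g (2 * x) = ∫ x in (0:ℝ)..1, g x := by
  have hsplit : ∫ x in (0:ℝ)..2, g x = (∫ x in (0:ℝ)..1, g x) + ∫ x in (1:ℝ)..2, g x :=
    (intervalIntegral.integral_add_adjacent_intervals (intInt hm hb 0 1) (intInt hm hb 1 2)).symm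
  have hper : ∫ x in (1:ℝ)..2, g x = ∫ x in (0:ℝ)..1, g x := by
    have := hp.intervalIntegral_add_eq 1 0
    norm_num at this
    exact this
  rw [intervalIntegral.integral_comp_mul_left g (two_ne_zero)]
  norm_num
  rw [hsplit, hper]
  ring

lemma bern_double {g : ℝ → ℝ} (hm : Measurable g) {c : ℝ} (hb : ∀ x, |g x| ≤ c)
    (hp : Function.Periodic g 1) :
    ∫ x in (0:ℝ)..1, bern x * g (2 * x)
      = (1/2) * ∫ x in (0:ℝ)..1, bern x * g x := by
  have hc0 : (0:ℝ) ≤ c := le_trans (abs_nonneg _) (hb 0)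
  -- measurability and bounds for products
  have hbgm : Measurable (fun x => bern x * g x) := bern_meas.mul hm
  have hbgb : ∀ x, |bern x * g x| ≤ c := fun x => by
    rw [abs_mul]
    calc |bern x| * |g x| ≤ 1 * c :=
      mul_le_mul (bern_bd x) (hb x) (abs_nonneg _) zero_le_one
    _ = c := one_mul c
  have hbgp : Function.Periodic (fun x => bern x * g x) 1 := fun x => by
    simp [bern_per x, hp x]
  -- the integrand on [0,1]
  have hFm : Measurable (fun x => bern x * g (2 * x)) :=
    bern_meas.mul (hm.comp (measurable_id.const_mul 2))
  have hFb : ∀ x, |bern x * g (2 * x)| ≤ c := fun x => by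
    rw [abs_mul]
    calc |bern x| * |g (2*x)| ≤ 1 * c :=
      mul_le_mul (bern_bd x) (hb _) (abs_nonneg _) zero_le_one
    _ = c := one_mul c
  set A := ∫ x in (0:ℝ)..1, bern x * g x with hA
  set B := ∫ x in (0:ℝ)..1, g x with hB
  -- auxiliary functions
  set h1 : ℝ → ℝ := fun y => (bern y / 2 - 1/4) * g y with hh1
  set h2 : ℝ → ℝ := fun y => (bern y / 2 + 1/4) * g y with hh2
  have h1m : Measurable h1 := ((bern_meas.div_const 2).sub measurable_const).mul hm
  have h2m : Measurable h2 := ((bern_meas.div_const 2).add measurable_const).mul hm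
  have h1b : ∀ x, |h1 x| ≤ c := fun x => by
    rw [hh1]; simp only
    rw [abs_mul]
    have : |bern x / 2 - 1/4| ≤ 1 := by
      have := bern_bd x; rw [abs_le] at this ⊢; constructor <;> [linarith [this.1]; linarith [this.2]]
    calc |bern x / 2 - 1/4| * |g x| ≤ 1 * c :=
      mul_le_mul this (hb x) (abs_nonneg _) zero_le_one
    _ = c := one_mul c
  have h2b : ∀ x, |h2 x| ≤ c := fun x => by
    rw [hh2]; simp only
    rw [abs_mul]
    have : |bern x / 2 + 1/4| ≤ 1 := by
      have := bern_bd x; rw [abs_le] at this ⊢; constructor <;> [linarith [this.1]; linarith [this.2]]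
    calc |bern x / 2 + 1/4| * |g x| ≤ 1 * c :=
      mul_le_mul this (hb x) (abs_nonneg _) zero_le_one
    _ = c := one_mul c
  have h1p : Function.Periodic h1 1 := fun x => by simp [hh1, bern_per x, hp x]
  have h2p : Function.Periodic h2 1 := fun x => by simp [hh2, bern_per x, hp x]
  -- value of ∫ h1, ∫ h2 over [0,1]
  have hgi : IntervalIntegrable g volume 0 1 := intInt hm hb 0 1
  have hbgi : IntervalIntegrable (fun x => bern x * g x) volume 0 1 := intInt hbgm hbgb 0 1
  have h1val : ∫ y in (0:ℝ)..1, h1 y = (1/2) * A - (1/4) * B := by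
    have : ∀ y, h1 y = (1/2) * (bern y * g y) - (1/4) * g y := fun y => by rw [hh1]; ring
    rw [intervalIntegral.integral_congr (fun y _ => this y)]
    rw [intervalIntegral.integral_sub ((hbgi.const_mul _)) (hgi.const_mul _),
      intervalIntegral.integral_const_mul, intervalIntegral.integral_const_mul]
  have h2val : ∫ y in (0:ℝ)..1, h2 y = (1/2) * A + (1/4) * B := by
    have : ∀ y, h2 y = (1/2) * (bern y * g y) + (1/4) * g y := fun y => by rw [hh2]; ring
    rw [intervalIntegral.integral_congr (fun y _ => this y)]
    rw [intervalIntegral.integral_add ((hbgi.const_mul _)) (hgi.const_mul _),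
      intervalIntegral.integral_const_mul, intervalIntegral.integral_const_mul]
  -- first half
  have half1 : ∫ x in (0:ℝ)..(1/2), bern x * g (2*x) = (1/2) * ((1/2) * A - (1/4) * B) := by
    have hne : ∀ᵐ x : ℝ, x ≠ (1/2 : ℝ) :=
      compl_mem_ae_iff.2 (measure_singleton _)
    have hcongr : ∫ x in (0:ℝ)..(1/2), bern x * g (2*x) = ∫ x in (0:ℝ)..(1/2), h1 (2*x) := by
      apply intervalIntegral.integral_congr_ae
      filter_upwards [hne] with x hx hmem
      rw [Set.uIoc_of_le (by norm_num : (0:ℝ) ≤ 1/2)] at hmem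
      have hx1 : 0 < x := hmem.1
      have hx2 : x < 1/2 := lt_of_le_of_ne hmem.2 hx
      have hf1 : ⌊x⌋ = 0 := Int.floor_eq_zero_iff.2 ⟨le_of_lt hx1, by linarith⟩
      have hf2 : ⌊(2:ℝ)*x⌋ = 0 := Int.floor_eq_zero_iff.2 ⟨by linarith, by linarith⟩
      rw [hh1]; simp only [bern, hf1, hf2]
      push_cast; ring
    rw [hcongr, intervalIntegral.integral_comp_mul_left h1 two_ne_zero]
    norm_num [h1val]
  -- second half
  have half2 : ∫ x in (1/2:ℝ)..1, bern x * g (2*x) = (1/2) * ((1/2) * A + (1/4) * B) := by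
    have hne : ∀ᵐ x : ℝ, x ≠ (1 : ℝ) :=
      compl_mem_ae_iff.2 (measure_singleton _)
    have hcongr : ∫ x in (1/2:ℝ)..1, bern x * g (2*x) = ∫ x in (1/2:ℝ)..1, h2 (2*x) := by
      apply intervalIntegral.integral_congr_ae
      filter_upwards [hne] with x hx hmem
      rw [Set.uIoc_of_le (by norm_num : (1/2:ℝ) ≤ 1)] at hmem
      have hx1 : 1/2 < x := hmem.1
      have hx2 : x < 1 := lt_of_le_of_ne hmem.2 hx
      have hf1 : ⌊x⌋ = 0 := Int.floor_eq_zero_iff.2 ⟨by linarith, hx2⟩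
      have hf2 : ⌊(2:ℝ)*x⌋ = 1 := by
        rw [Int.floor_eq_iff]
        constructor <;> push_cast <;> linarith
      rw [hh2]; simp only [bern, hf1, hf2]
      push_cast; ring
    rw [hcongr, intervalIntegral.integral_comp_mul_left h2 two_ne_zero]
    have hper : ∫ y in (1:ℝ)..2, h2 y = ∫ y in (0:ℝ)..1, h2 y := by
      have := h2p.intervalIntegral_add_eq 1 0
      norm_num at this; exact this
    norm_num [hper, h2val]
  -- combine
  have := intervalIntegral.integral_add_adjacent_intervals
    (intInt hFm hFb 0 (1/2)) (intInt hFm hFb (1/2) 1)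
  rw [← this, half1, half2]
  ring

lemma S_succ (n : ℕ) (x : ℝ) : S (n+1) x = bern (2*x) + S n (2*x) := by
  unfold S
  rw [Finset.sum_range_succ']
  have h0 : bern (2^(0+1)*x) = bern (2*x) := by norm_num
  have hs : ∑ i ∈ Finset.range n, bern (2^(i+1+1)*x)
      = ∑ j ∈ Finset.range n, bern (2^(j+1)*(2*x)) := by
    refine Finset.sum_congr rfl fun i _ => ?_
    congr 1
    ring
  rw [h0, hs, add_comm]

lemma bern_sq : ∫ x in (0:ℝ)..1, bern x * bern x = 1/12 := by
  have hne : ∀ᵐ x : ℝ, x ≠ (1 : ℝ) := compl_mem_ae_iff.2 (measure_singleton _)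
  have hcongr : ∫ x in (0:ℝ)..1, bern x * bern x
      = ∫ x in (0:ℝ)..1, (x^2 - x + 1/4) := by
    apply intervalIntegral.integral_congr_ae
    filter_upwards [hne] with x hx hmem
    rw [Set.uIoc_of_le (by norm_num : (0:ℝ) ≤ 1)] at hmem
    have hf : ⌊x⌋ = 0 := Int.floor_eq_zero_iff.2
      ⟨le_of_lt hmem.1, lt_of_le_of_ne hmem.2 hx⟩
    simp only [bern, hf]
    push_cast; ring
  rw [hcongr]
  have h1 : IntervalIntegrable (fun x : ℝ => x^2) volume 0 1 :=
    (continuous_pow 2).intervalIntegrable 0 1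
  have h2 : IntervalIntegrable (fun x : ℝ => x) volume 0 1 :=
    continuous_id.intervalIntegrable 0 1
  rw [intervalIntegral.integral_add (h1.sub h2) (intervalIntegrable_const),
    intervalIntegral.integral_sub h1 h2, integral_pow, integral_id,
    intervalIntegral.integral_const]
  norm_num

lemma C_val (n : ℕ) : ∫ x in (0:ℝ)..1, bern x * S n x = (1 - (1/2:ℝ)^n)/12 := by
  induction n with
  | zero => simp [S]
  | succ n ih =>
    have hcongr : ∀ x, bern x * S (n+1) x
        = bern x * bern (2*x) + bern x * S n (2*x) := fun x => by
      rw [S_succ]; ring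
    rw [intervalIntegral.integral_congr (fun x _ => hcongr x)]
    have i1 : IntervalIntegrable (fun x => bern x * bern (2*x)) volume 0 1 := by
      apply intInt (bern_meas.mul (bern_meas.comp (measurable_id.const_mul 2))) (c := 1)
      intro x
      show |bern x * bern (2*x)| ≤ 1
      rw [abs_mul]
      calc |bern x| * |bern (2*x)| ≤ 1 * 1 :=
        mul_le_mul (bern_bd x) (bern_bd _) (abs_nonneg _) zero_le_one
      _ = 1 := one_mul 1
    have i2 : IntervalIntegrable (fun x => bern x * S n (2*x)) volume 0 1 := by
      apply intInt (bern_meas.mul ((S_meas n).comp (measurable_id.const_mul 2))) (c := (n:ℝ))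
      intro x
      show |bern x * S n (2*x)| ≤ n
      rw [abs_mul]
      calc |bern x| * |S n (2*x)| ≤ 1 * n :=
        mul_le_mul (bern_bd x) (S_bd n _) (abs_nonneg _) zero_le_one
      _ = n := one_mul _
    rw [intervalIntegral.integral_add i1 i2]
    have e1 : ∫ x in (0:ℝ)..1, bern x * bern (2*x) = 1/24 := by
      rw [bern_double bern_meas bern_bd bern_per, bern_sq]; norm_num
    have e2 : ∫ x in (0:ℝ)..1, bern x * S n (2*x)
        = (1/2) * ((1 - (1/2:ℝ)^n)/12) := by
      rw [bern_double (S_meas n) (S_bd n) (S_per n), ih]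
    rw [e1, e2]
    have h2n : ((1:ℝ)/2)^(n+1) = (1/2)^n * (1/2) := pow_succ _ _
    rw [h2n]; ring

lemma I_val (n : ℕ) : ∫ x in (0:ℝ)..1, (S n x)^2 = (n:ℝ)/4 - 1/3 + 1/(3*2^n) := by
  induction n with
  | zero => norm_num [S]
  | succ n ih =>
    have hcongr : ∀ x, (S (n+1) x)^2 = (fun y => (bern y + S n y)^2) (2*x) := fun x => by
      rw [S_succ]
    rw [intervalIntegral.integral_congr (fun x _ => hcongr x)]
    have hm : Measurable (fun y => (bern y + S n y)^2) := (bern_meas.add (S_meas n)).pow_const 2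
    have hbd : ∀ y, |(bern y + S n y)^2| ≤ ((n:ℝ)+1)^2 := fun y => by
      rw [abs_pow]
      have : |bern y + S n y| ≤ (n:ℝ) + 1 := by
        calc |bern y + S n y| ≤ |bern y| + |S n y| := abs_add_le _ _
        _ ≤ 1 + n := add_le_add (bern_bd y) (S_bd n y)
        _ = n + 1 := by ring
      exact pow_le_pow_left₀ (abs_nonneg _) this 2
    have hper : Function.Periodic (fun y => (bern y + S n y)^2) 1 := fun y => by
      simp [bern_per y, S_per n y]
    rw [comp_two hm hbd hper]
    have hexp : ∀ y, (bern y + S n y)^2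
        = bern y * bern y + (2 * (bern y * S n y) + (S n y)^2) := fun y => by ring
    rw [intervalIntegral.integral_congr (fun y _ => hexp y)]
    have ibb : IntervalIntegrable (fun y => bern y * bern y) volume 0 1 := by
      apply intInt (bern_meas.mul bern_meas) (c := 1)
      intro x; show |bern x * bern x| ≤ 1; rw [abs_mul]
      calc |bern x| * |bern x| ≤ 1 * 1 :=
        mul_le_mul (bern_bd x) (bern_bd _) (abs_nonneg _) zero_le_one
      _ = 1 := one_mul 1
    have ibs : IntervalIntegrable (fun y => bern y * S n y) volume 0 1 := by
      apply intInt (bern_meas.mul (S_meas n)) (c := (n:ℝ))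
      intro x; show |bern x * S n x| ≤ n; rw [abs_mul]
      calc |bern x| * |S n x| ≤ 1 * n :=
        mul_le_mul (bern_bd x) (S_bd n _) (abs_nonneg _) zero_le_one
      _ = n := one_mul _
    have iss : IntervalIntegrable (fun y => (S n y)^2) volume 0 1 := by
      apply intInt ((S_meas n).pow_const 2) (c := (n:ℝ)^2)
      intro x; rw [abs_pow]
      exact pow_le_pow_left₀ (abs_nonneg _) (S_bd n x) 2
    rw [intervalIntegral.integral_add ibb ((ibs.const_mul 2).add iss),
      intervalIntegral.integral_add (ibs.const_mul 2) iss,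
      intervalIntegral.integral_const_mul, bern_sq, C_val, ih]
    have h2 : (2:ℝ)^(n+1) = 2^n * 2 := pow_succ _ _
    have hpos : (0:ℝ) < 2^n := pow_pos two_pos n
    push_cast
    rw [h2]
    have h12 : ((1:ℝ)/2)^n = 1/2^n := by rw [div_pow, one_pow]
    rw [h12]
    field_simp
    ring

lemma finsum_val (n : ℕ) : ∑ p ∈ Finset.range n, ((1:ℝ)/2 - 1/2^(p+2))^2
    = (n:ℝ)/4 - 1/2 + (1/2:ℝ)^n/2 + 1/12 - (1/4:ℝ)^n/12 := by
  induction n with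
  | zero => norm_num
  | succ n ih =>
    rw [Finset.sum_range_succ, ih]
    have h2 : ((1:ℝ)/2)^(n+1) = (1/2)^n * (1/2) := pow_succ _ _
    have h4 : ((1:ℝ)/4)^(n+1) = (1/4)^n * (1/4) := pow_succ _ _
    have h2n : (2:ℝ)^(n+2) = 2^n * 4 := by rw [pow_add]; norm_num
    have h12 : ((1:ℝ)/2)^n = 1/2^n := by rw [div_pow, one_pow]
    have h14 : ((1:ℝ)/4)^n = 1/4^n := by rw [div_pow, one_pow]
    have h4n : (4:ℝ)^n = 2^n * 2^n := by
      rw [show (4:ℝ) = 2*2 by norm_num, mul_pow]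
    have hpos : (0:ℝ) < 2^n := pow_pos two_pos n
    rw [h2, h4, h2n, h12, h14, h4n]
    push_cast
    field_simp
    ring

lemma tsum_val (n : ℕ) : ∑' p : ℕ, ((1:ℝ)/2^(p+2) - 1/2^(p+n+2))^2
    = (1 - (1/2:ℝ)^n)^2/12 := by
  have hterm : ∀ p : ℕ, ((1:ℝ)/2^(p+2) - 1/2^(p+n+2))^2
      = ((1 - (1/2:ℝ)^n)/4)^2 * (1/4)^p := by
    intro p
    have hp : (0:ℝ) < 2^p := pow_pos two_pos p
    have hn : (0:ℝ) < 2^n := pow_pos two_pos n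
    have e1 : (2:ℝ)^(p+2) = 2^p * 4 := by rw [pow_add]; norm_num
    have e2 : (2:ℝ)^(p+n+2) = 2^p * 2^n * 4 := by rw [pow_add, pow_add]; norm_num
    have e3 : ((1:ℝ)/2)^n = 1/2^n := by rw [div_pow, one_pow]
    have e4 : ((1:ℝ)/4)^p = 1/(2^p * 2^p) := by
      rw [div_pow, one_pow, show (4:ℝ) = 2*2 by norm_num, mul_pow]
    rw [e1, e2, e3, e4]
    field_simp
  rw [tsum_congr hterm, tsum_mul_left,
    tsum_geometric_of_lt_one (by norm_num) (by norm_num : (1/4:ℝ) < 1)]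
  norm_num
  ring

lemma Icc_eq_S (n : ℕ) (x : ℝ) :
    ∑ k ∈ Finset.Icc 1 n, bern (2^k * x) = S n x := by
  induction n with
  | zero => simp [S]
  | succ n ih =>
    rw [Finset.sum_Icc_succ_top (Nat.one_le_iff_ne_zero.2 (Nat.succ_ne_zero n)), ih]
    simp [S, Finset.sum_range_succ]

/-- For every `n ≥ 1`,
`∑_{p=0}^{n-1} (1/2 - 1/2^(p+2))² + ∑_{p=0}^∞ (1/2^(p+2) - 1/2^(p+n+2))²
  = n/4 - 1/3 + 1/(3·2^n)`; consequently
`(1/n) ∫_0^1 (∑_{k=1}^n f(2^k x))² dx → 1/4` as `n → ∞`, where `f(x) = x - ⌊x⌋ - 1/2`. -/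
theorem variance_bern_sum :
    (∀ n : ℕ, 1 ≤ n →
      (∑ p ∈ Finset.range n, ((1 : ℝ) / 2 - (1 : ℝ) / 2 ^ (p + 2)) ^ 2) +
          ∑' p : ℕ, ((1 : ℝ) / 2 ^ (p + 2) - (1 : ℝ) / 2 ^ (p + n + 2)) ^ 2 =
        (n : ℝ) / 4 - 1 / 3 + 1 / (3 * 2 ^ n)) ∧
    Tendsto (fun n : ℕ =>
        (1 / n : ℝ) * ∫ x in (0 : ℝ)..1, (∑ k ∈ Finset.Icc 1 n, bern (2 ^ k * x)) ^ 2)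
      atTop (nhds (1 / 4)) := by
  constructor
  · intro n _
    rw [finsum_val, tsum_val]
    have h12 : ((1:ℝ)/2)^n = 1/2^n := by rw [div_pow, one_pow]
    have h14 : ((1:ℝ)/4)^n = 1/(2^n * 2^n) := by
      rw [div_pow, one_pow, show (4:ℝ) = 2*2 by norm_num, mul_pow]
    have hpos : (0:ℝ) < 2^n := pow_pos two_pos n
    rw [h12, h14]
    field_simp
    ring
  · have hval : ∀ n : ℕ,
        (1 / n : ℝ) * ∫ x in (0 : ℝ)..1, (∑ k ∈ Finset.Icc 1 n, bern (2 ^ k * x)) ^ 2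
          = (1/n : ℝ) * ((n:ℝ)/4 - 1/3 + 1/(3*2^n)) := by
      intro n
      congr 1
      rw [intervalIntegral.integral_congr (g := fun x => (S n x)^2)
        (fun x _ => by rw [Icc_eq_S]), I_val]
    have hT : Tendsto (fun n : ℕ =>
        1/4 - 1/3 * (1/(n:ℝ)) + 1/3 * ((1/2:ℝ)^n * (1/(n:ℝ)))) atTop
        (nhds (1/4 - 1/3 * 0 + 1/3 * (0 * 0))) := by
      refine Tendsto.add (Tendsto.sub tendsto_const_nhds ?_) ?_
      · exact tendsto_one_div_atTop_nhds_zero_nat.const_mul _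
      · exact ((tendsto_pow_atTop_nhds_zero_of_lt_one (by norm_num) (by norm_num)).mul
          tendsto_one_div_atTop_nhds_zero_nat).const_mul _
    norm_num at hT
    apply hT.congr'
    filter_upwards [eventually_ge_atTop 1] with n hn
    rw [hval]
    have hnpos : (0:ℝ) < n := by exact_mod_cast hn
    have hpos : (0:ℝ) < 2^n := pow_pos two_pos n
    have h12 : ((1:ℝ)/2)^n = 1/2^n := by rw [div_pow, one_pow]
    rw [h12]
    field_simp
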